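/- Monotonicity of confidence ratios under tempering toward uniformity: for a probability vector m ∈ (0,1)^K with m_y > 1/K, the tempered true-class probability m_y^{1/T}/∑_k m_k^{1/T} is strictly decreasing in T on (0, ∞) whenever m is not uniform, hence the tempered confidence ratio r(T) = (m_y^{1/T}/∑_k m_k^{1/T}) / (1 − m_y^{1/T}/∑_k m_k^{1/T}) is strictly decreasing in T when m_y = max_k m_k and m is not uniform; moreover r(T) → ∞ as T → 0⁺ and r(T) → 1/(K−1) as T → ∞. -/

import Mathlib

open Filter Topology

/-- Monotonicity of the tempered true-class probability and confidence ratio. -/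
theorem tempered_confidence_ratio_monotone {K : ℕ} (hK : 2 ≤ K)
    (m : Fin K → ℝ) (hm0 : ∀ k, 0 < m k) (hm1 : ∀ k, m k < 1)
    (hmsum : ∑ k, m k = 1)
    (y : Fin K) (hy : ∀ k, k ≠ y → m k < m y) (hy' : 1 / (K:ℝ) < m y)
    (hnonunif : m ≠ fun _ => 1 / (K:ℝ))
    (f r : ℝ → ℝ)
    (hf : ∀ T, f T = m y ^ (1 / T) / ∑ k, m k ^ (1 / T))
    (hr : ∀ T, r T = f T / (1 - f T)) :
    StrictAntiOn f (Set.Ioi 0) ∧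
    StrictAntiOn r (Set.Ioi 0) ∧
    Tendsto r (nhdsWithin 0 (Set.Ioi 0)) atTop ∧
    Tendsto r atTop (nhds (1 / ((K:ℝ) - 1))) := by
  have hmy : 0 < m y := hm0 y
  set h : ℝ → ℝ := fun T => ∑ k, (m k / m y) ^ (1 / T) with hh
  have hratio1 : ∀ k, k ≠ y → m k / m y < 1 := fun k hk => (div_lt_one hmy).2 (hy k hk)
  have hratio0 : ∀ k, 0 < m k / m y := fun k => div_pos (hm0 k) hmy
  -- f T = 1 / h T
  have hfh : ∀ T, f T = 1 / h T := by
    intro T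
    rw [hf, hh]
    have e1 : ∑ k, (m k / m y) ^ (1 / T) = (∑ k, m k ^ (1 / T)) / m y ^ (1 / T) := by
      rw [Finset.sum_div]
      refine Finset.sum_congr rfl fun k _ => ?_
      rw [Real.div_rpow (hm0 k).le hmy.le]
    simp only [e1, one_div_div]
  have hK0 : 0 < K := by omega
  haveI : NeZero K := ⟨hK0.ne'⟩
  obtain ⟨j, hj⟩ := Fintype.exists_ne_of_one_lt_card (by simp; omega : 1 < Fintype.card (Fin K)) y
  -- basic bounds on h
  have hpos : ∀ T, (0:ℝ) < h T := by
    intro T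
    exact Finset.sum_pos (fun k _ => Real.rpow_pos_of_pos (hratio0 k) _) Finset.univ_nonempty
  have hgt1 : ∀ T, 1 < h T := by
    intro T
    have := Finset.single_lt_sum (f := fun k => (m k / m y) ^ (1 / T)) hj
      (Finset.mem_univ y) (Finset.mem_univ j)
      (Real.rpow_pos_of_pos (hratio0 j) _)
      (fun k _ _ => (Real.rpow_pos_of_pos (hratio0 k) _).le)
    rw [hh]
    simpa [div_self hmy.ne', Real.one_rpow] using this
  -- h is strictly monotone on Ioi 0
  have hmono : StrictMonoOn h (Set.Ioi 0) := by
    intro T1 hT1 T2 hT2 hlt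
    simp only [Set.mem_Ioi] at hT1 hT2
    refine Finset.sum_lt_sum (fun k _ => ?_) ⟨j, Finset.mem_univ j, ?_⟩
    · rcases eq_or_ne k y with rfl | hk
      · simp [div_self hmy.ne']
      · exact (Real.rpow_lt_rpow_of_exponent_gt (hratio0 k) (hratio1 k hk)
          (one_div_lt_one_div_of_lt hT1 hlt)).le
    · exact Real.rpow_lt_rpow_of_exponent_gt (hratio0 j) (hratio1 j hj)
        (one_div_lt_one_div_of_lt hT1 hlt)
  -- f is strictly antitone
  have hfanti : StrictAntiOn f (Set.Ioi 0) := by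
    intro T1 hT1 T2 hT2 hlt
    rw [hfh, hfh]
    exact one_div_lt_one_div_of_lt (hpos T1) (hmono hT1 hT2 hlt)
  -- r T = 1 / (h T - 1)
  have hrh : ∀ T, r T = 1 / (h T - 1) := by
    intro T
    rw [hr, hfh]
    have h1 : h T ≠ 0 := (hpos T).ne'
    have h2 : h T - 1 ≠ 0 := sub_ne_zero.2 (hgt1 T).ne'
    field_simp
  have hranti : StrictAntiOn r (Set.Ioi 0) := by
    intro T1 hT1 T2 hT2 hlt
    rw [hrh, hrh]
    exact one_div_lt_one_div_of_lt (sub_pos.2 (hgt1 T1)) (by linarith [hmono hT1 hT2 hlt])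
  refine ⟨hfanti, hranti, ?_, ?_⟩
  -- limit at 0⁺
  · have hsplit : ∀ T, h T - 1 = ∑ k ∈ Finset.univ.erase y, (m k / m y) ^ (1 / T) := by
      intro T
      have := Finset.add_sum_erase Finset.univ (fun k => (m k / m y) ^ (1 / T))
        (Finset.mem_univ y)
      rw [hh]
      simp only [div_self hmy.ne', Real.one_rpow] at this ⊢
      linarith [this]
    have htend : Tendsto (fun T => h T - 1) (𝓝[>] (0:ℝ)) (𝓝[>] 0) := by
      have hbase : Tendsto (fun T : ℝ => 1 / T) (𝓝[>] (0:ℝ)) atTop := by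
        simpa [one_div] using tendsto_inv_nhdsGT_zero (𝕜 := ℝ)
      have hsum : Tendsto (fun T => ∑ k ∈ Finset.univ.erase y, (m k / m y) ^ (1 / T))
          (𝓝[>] (0:ℝ)) (𝓝 0) := by
        have : Tendsto (fun T => ∑ k ∈ Finset.univ.erase y, (m k / m y) ^ (1 / T))
            (𝓝[>] (0:ℝ)) (𝓝 (∑ k ∈ Finset.univ.erase y, (0:ℝ))) := by
          refine tendsto_finset_sum _ fun k hk => ?_
          have hk' : k ≠ y := Finset.ne_of_mem_erase hk
          exact (tendsto_rpow_atTop_of_base_lt_one _ (by linarith [hratio0 k])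
            (hratio1 k hk')).comp hbase
        simpa using this
      have hsum' : Tendsto (fun T => h T - 1) (𝓝[>] (0:ℝ)) (𝓝 0) := by
        refine hsum.congr fun T => (hsplit T).symm
      refine tendsto_nhdsWithin_of_tendsto_nhds_of_eventually_within _ hsum' ?_
      exact Filter.Eventually.of_forall fun T => sub_pos.2 (hgt1 T)
    have := htend.inv_tendsto_nhdsGT_zero
    refine this.congr fun T => ?_
    rw [hrh]
    simp [one_div]
  -- limit at ∞
  · have hbase : Tendsto (fun T : ℝ => 1 / T) atTop (𝓝 0) := by
      simpa [one_div] using tendsto_inv_atTop_zero (𝕜 := ℝ)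
    have hsum : Tendsto h atTop (𝓝 (K : ℝ)) := by
      have : Tendsto h atTop (𝓝 (∑ _k : Fin K, (1:ℝ))) := by
        refine tendsto_finset_sum _ fun k _ => ?_
        have hc : ContinuousAt (fun u : ℝ => (m k / m y) ^ u) 0 :=
          Real.continuousAt_const_rpow (hratio0 k).ne'
        have := hc.tendsto.comp hbase
        simpa [Real.rpow_zero, Function.comp_def] using this
      simpa using this
    have hKne : (K:ℝ) - 1 ≠ 0 := by
      have : (2:ℝ) ≤ K := by exact_mod_cast hK
      linarith
    have : Tendsto (fun T => (h T - 1)⁻¹) atTop (𝓝 (((K:ℝ) - 1)⁻¹)) :=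
      ((hsum.sub tendsto_const_nhds).inv₀ hKne)
    rw [one_div]
    exact this.congr fun T => by rw [hrh T, one_div]
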